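/- Let A₀ be a symmetric n×n matrix and A₁ a symmetric n×n matrix. Suppose A₀ is singular and A₁ is positive definite on Null(A₀), and suppose there exists x̄ with x̄ᵀA₀x̄ < 0 and x̄ᵀA₁x̄ < 0. Define θ := inf{ xᵀA₀x : xᵀ(A₀ − A₁)x = 1, x ∈ V }, where V is the subspace spanned by the eigenvectors of A₀ with nonnegative eigenvalues. Then θ > 0. -/

import Mathlib

open Matrix
open scoped RealInnerProductSpace

private lemma dot_symm' {n : ℕ} (A : Matrix (Fin n) (Fin n) ℝ) (hA : A.IsSymm)
    (a b : Fin n → ℝ) : a ⬝ᵥ A *ᵥ b = b ⬝ᵥ A *ᵥ a := by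
  rw [Matrix.dotProduct_mulVec, ← Matrix.mulVec_transpose, hA.eq, dotProduct_comm]

private lemma dot_sum_left' {n : ℕ} (a : Fin n → ℝ) (v : Fin n → (Fin n → ℝ)) (y : Fin n → ℝ) :
    (∑ i, a i • v i) ⬝ᵥ y = ∑ i, a i * (v i ⬝ᵥ y) := by
  simp only [dotProduct, Finset.sum_apply, Pi.smul_apply, smul_eq_mul, Finset.sum_mul,
    mul_assoc, Finset.mul_sum]
  exact Finset.sum_comm

private lemma dot_sum_right' {n : ℕ} (y : Fin n → ℝ) (b : Fin n → ℝ) (v : Fin n → (Fin n → ℝ)) :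
    y ⬝ᵥ (∑ j, b j • v j) = ∑ j, b j * (y ⬝ᵥ v j) := by
  simp only [dotProduct, Finset.sum_apply, Pi.smul_apply, smul_eq_mul, Finset.sum_mul,
    Finset.mul_sum, mul_left_comm]
  exact Finset.sum_comm

private lemma dot_mulVec_sum_sum' {n : ℕ} (B : Matrix (Fin n) (Fin n) ℝ) (a b : Fin n → ℝ)
    (v : Fin n → (Fin n → ℝ)) :
    (∑ i, a i • v i) ⬝ᵥ B *ᵥ (∑ j, b j • v j)
      = ∑ i, ∑ j, a i * b j * (v i ⬝ᵥ B *ᵥ v j) := by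
  have h1 : B *ᵥ (∑ j, b j • v j) = ∑ j, b j • (B *ᵥ v j) := by
    rw [← Matrix.mulVecLin_apply, map_sum]
    simp [Matrix.mulVecLin_apply]
  rw [h1, dot_sum_left']
  refine Finset.sum_congr rfl fun i _ => ?_
  rw [dot_sum_right', Finset.mul_sum]
  exact Finset.sum_congr rfl fun j _ => by ring

private lemma dot_sum_sum' {n : ℕ} (a b : Fin n → ℝ) (v : Fin n → (Fin n → ℝ)) :
    (∑ i, a i • v i) ⬝ᵥ (∑ j, b j • v j) = ∑ i, ∑ j, a i * b j * (v i ⬝ᵥ v j) := by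
  rw [dot_sum_left']
  refine Finset.sum_congr rfl fun i _ => ?_
  rw [dot_sum_right', Finset.mul_sum]
  exact Finset.sum_congr rfl fun j _ => by ring

private lemma norm_sq_eq_dot' {n : ℕ} (u : Fin n → ℝ) :
    ‖(WithLp.toLp 2 u : EuclideanSpace ℝ (Fin n))‖ ^ 2 = u ⬝ᵥ u := by
  rw [EuclideanSpace.norm_sq_eq]
  simp [dotProduct, sq]

/-- The coercivity constant of `A1` on the kernel of `A0`. -/
private lemma kernel_coercive {n : ℕ} (A0 A1 : Matrix (Fin n) (Fin n) ℝ) (hsing : A0.det = 0)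
    (hpd : ∀ z : Fin n → ℝ, A0.mulVec z = 0 → z ≠ 0 → 0 < z ⬝ᵥ A1.mulVec z) :
    ∃ c : ℝ, 0 < c ∧ ∀ z : EuclideanSpace ℝ (Fin n), A0.mulVec z = 0 →
      c * ‖z‖ ^ 2 ≤ (z : Fin n → ℝ) ⬝ᵥ A1.mulVec z := by
  classical
  set K : Set (EuclideanSpace ℝ (Fin n)) :=
    {z | A0.mulVec z = 0} ∩ Metric.sphere 0 1 with hK
  have hclosed : IsClosed {z : EuclideanSpace ℝ (Fin n) | A0.mulVec z = 0} := by
    have hc : Continuous (Matrix.toEuclideanLin A0) :=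
      (Matrix.toEuclideanLin A0).continuous_of_finiteDimensional
    have : {z : EuclideanSpace ℝ (Fin n) | A0.mulVec z = 0}
        = (Matrix.toEuclideanLin A0) ⁻¹' {0} := by ext z; simp [Matrix.toEuclideanLin_apply, WithLp.toLp_eq_zero]
    rw [this]
    exact (isClosed_singleton.preimage hc)
  have hKcpt : IsCompact K := ((isCompact_sphere 0 1).inter_left hclosed)
  have hKne : K.Nonempty := by
    obtain ⟨v, hv0, hv⟩ := (Matrix.exists_mulVec_eq_zero_iff).2 hsing
    refine ⟨(‖(WithLp.toLp 2 v : EuclideanSpace ℝ (Fin n))‖⁻¹ : ℝ) •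
      (WithLp.toLp 2 v : EuclideanSpace ℝ (Fin n)), ?_, ?_⟩
    · show A0.mulVec _ = 0
      rw [WithLp.ofLp_smul, Matrix.mulVec_smul]
      show _ • A0.mulVec v = 0
      rw [hv, smul_zero]
    · have hnv : ‖(WithLp.toLp 2 v : EuclideanSpace ℝ (Fin n))‖ ≠ 0 := by
        simpa using hv0
      simp [norm_smul, inv_mul_cancel₀ hnv]
  have hfc : Continuous (fun z : EuclideanSpace ℝ (Fin n) => (z : Fin n → ℝ) ⬝ᵥ A1.mulVec z) := by
    have : (fun z : EuclideanSpace ℝ (Fin n) => (z : Fin n → ℝ) ⬝ᵥ A1.mulVec z)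
        = fun z => ⟪z, Matrix.toEuclideanLin A1 z⟫ := by
      funext z
      simp [PiLp.inner_apply, dotProduct, RCLike.inner_apply, mul_comm]
    rw [this]
    exact continuous_id.inner (Matrix.toEuclideanLin A1).continuous_of_finiteDimensional
  obtain ⟨z0, hz0K, hmin⟩ := hKcpt.exists_isMinOn hKne hfc.continuousOn
  have hz0ne : (z0 : Fin n → ℝ) ≠ 0 := by
    have := hz0K.2
    simp only [Metric.mem_sphere, dist_zero_right] at this
    intro h
    rw [show z0 = 0 from (WithLp.ofLp_eq_zero 2).1 h] at this
    simp at this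
  refine ⟨(z0 : Fin n → ℝ) ⬝ᵥ A1.mulVec z0, hpd _ hz0K.1 hz0ne, ?_⟩
  intro z hz
  rcases eq_or_ne z 0 with rfl | hzne
  · simp [Matrix.mulVec_zero]
  · have hnz : (0:ℝ) < ‖z‖ := norm_pos_iff.2 hzne
    set s := ‖z‖⁻¹
    have hzK : (s • z) ∈ K := by
      constructor
      · show A0.mulVec _ = 0
        rw [WithLp.ofLp_smul, Matrix.mulVec_smul]
        show _ • A0.mulVec z = 0
        rw [hz, smul_zero]
      · simp [s, norm_smul, inv_mul_cancel₀ hnz.ne']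
    have h1 : (z0 : Fin n → ℝ) ⬝ᵥ A1.mulVec z0 ≤
        ((s • z : EuclideanSpace ℝ (Fin n)) : Fin n → ℝ) ⬝ᵥ
          A1.mulVec (s • z : EuclideanSpace ℝ (Fin n)) := hmin hzK
    have h2 : ((s • z : EuclideanSpace ℝ (Fin n)) : Fin n → ℝ) ⬝ᵥ
        A1.mulVec ((s • z : EuclideanSpace ℝ (Fin n)))
          = s^2 * ((z : Fin n → ℝ) ⬝ᵥ A1.mulVec z) := by
      show (s • (z : Fin n → ℝ)) ⬝ᵥ A1.mulVec (s • (z : Fin n → ℝ)) = _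
      rw [Matrix.mulVec_smul, smul_dotProduct, dotProduct_smul]
      simp [smul_eq_mul]; ring
    rw [h2] at h1
    have hs2 : s^2 * ‖z‖^2 = 1 := by
      show ‖z‖⁻¹ ^ 2 * ‖z‖ ^ 2 = 1
      rw [inv_pow, inv_mul_cancel₀ (pow_ne_zero 2 hnz.ne')]
    have h3 := mul_le_mul_of_nonneg_right h1 (sq_nonneg ‖z‖)
    calc (z0 : Fin n → ℝ) ⬝ᵥ A1.mulVec z0 * ‖z‖ ^ 2
        ≤ (s^2 * ((z : Fin n → ℝ) ⬝ᵥ A1.mulVec z)) * ‖z‖^2 := h3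
      _ = ((z : Fin n → ℝ) ⬝ᵥ A1.mulVec z) * (s^2 * ‖z‖^2) := by ring
      _ = _ := by rw [hs2, mul_one]

theorem stmt_6 (n : ℕ) (A0 A1 : Matrix (Fin n) (Fin n) ℝ)
    (hA0 : A0.IsSymm) (hA1 : A1.IsSymm)
    (hsing : A0.det = 0)
    (hpd : ∀ z : Fin n → ℝ, A0.mulVec z = 0 → z ≠ 0 → 0 < z ⬝ᵥ A1.mulVec z)
    (xbar : Fin n → ℝ)
    (h0 : xbar ⬝ᵥ A0.mulVec xbar < 0) (h1 : xbar ⬝ᵥ A1.mulVec xbar < 0) :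
    ∃ θ : ℝ, 0 < θ ∧
      ∀ x ∈ Submodule.span ℝ {v : Fin n → ℝ | ∃ μ : ℝ, 0 ≤ μ ∧ A0.mulVec v = μ • v},
        x ⬝ᵥ (A0 - A1).mulVec x = 1 → θ ≤ x ⬝ᵥ A0.mulVec x := by
  classical
  have hH : A0.IsHermitian := by
    rw [Matrix.IsHermitian, Matrix.conjTranspose_eq_transpose_of_trivial]; exact hA0
  set lam : Fin n → ℝ := hH.eigenvalues with hlam
  set e : Fin n → (Fin n → ℝ) := fun i => (hH.eigenvectorBasis i : Fin n → ℝ) with he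
  have heig : ∀ j, A0.mulVec (e j) = lam j • (e j) := fun j => hH.mulVec_eigenvectorBasis j
  have hortho : ∀ i j, e i ⬝ᵥ e j = if i = j then 1 else 0 := by
    intro i j
    have := (orthonormal_iff_ite.1 hH.eigenvectorBasis.orthonormal) i j
    rw [← this]
    simp [PiLp.inner_apply, dotProduct, RCLike.inner_apply, mul_comm]
    rfl
  -- coercivity constant on the kernel
  obtain ⟨cN, hcN, hcoer⟩ := kernel_coercive A0 A1 hsing hpd
  -- operator norm bound for A1
  set L : EuclideanSpace ℝ (Fin n) →L[ℝ] EuclideanSpace ℝ (Fin n) :=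
    LinearMap.toContinuousLinearMap (Matrix.toEuclideanLin A1) with hL
  set M : ℝ := ‖L‖ with hM
  have hMnn : 0 ≤ M := norm_nonneg L
  have hMbound : ∀ a b : Fin n → ℝ, |a ⬝ᵥ A1.mulVec b| ≤
      M * ‖(WithLp.toLp 2 a : EuclideanSpace ℝ (Fin n))‖ * ‖(WithLp.toLp 2 b : EuclideanSpace ℝ (Fin n))‖ := by
    intro a b
    have h1 : a ⬝ᵥ A1.mulVec b = ⟪(WithLp.toLp 2 a : EuclideanSpace ℝ (Fin n)),
        L (WithLp.toLp 2 b : EuclideanSpace ℝ (Fin n))⟫ := by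
      simp [PiLp.inner_apply, dotProduct, RCLike.inner_apply, mul_comm]
      rfl
    rw [h1]
    calc |⟪(WithLp.toLp 2 a : EuclideanSpace ℝ (Fin n)), L (WithLp.toLp 2 b : EuclideanSpace ℝ (Fin n))⟫|
        ≤ ‖(WithLp.toLp 2 a : EuclideanSpace ℝ (Fin n))‖ *
          ‖L (WithLp.toLp 2 b : EuclideanSpace ℝ (Fin n))‖ := abs_real_inner_le_norm _ _
      _ ≤ ‖(WithLp.toLp 2 a : EuclideanSpace ℝ (Fin n))‖ *
          (M * ‖(WithLp.toLp 2 b : EuclideanSpace ℝ (Fin n))‖) := by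
          exact mul_le_mul_of_nonneg_left (L.le_opNorm _) (norm_nonneg _)
      _ = _ := by ring
  -- the minimal positive eigenvalue
  set T : Finset (Fin n) := Finset.univ.filter (fun i => 0 < lam i) with hT
  set s : Finset ℝ := insert (1:ℝ) (T.image lam) with hs
  have hsne : s.Nonempty := ⟨1, Finset.mem_insert_self 1 _⟩
  set δ : ℝ := s.min' hsne with hδ
  have hδpos : 0 < δ := by
    have hmem := s.min'_mem hsne
    rcases Finset.mem_insert.1 hmem with h | h
    · rw [hδ] at *; rw [h]; norm_num
    · obtain ⟨i, hi, hlami⟩ := Finset.mem_image.1 h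
      have : 0 < lam i := (Finset.mem_filter.1 hi).2
      rw [hδ] at *; rw [← hlami] at *; exact this
  have hδle : ∀ i, 0 < lam i → δ ≤ lam i := by
    intro i hi
    exact s.min'_le _ (Finset.mem_insert_of_mem (Finset.mem_image.2
      ⟨i, Finset.mem_filter.2 ⟨Finset.mem_univ i, hi⟩, rfl⟩))
  -- the final constant
  set κ : ℝ := 1 + (M^2/cN + M)/δ with hκ
  have hκpos : 0 < κ := by
    have h1 : 0 ≤ M^2/cN := div_nonneg (sq_nonneg M) hcN.le
    have h2 : 0 ≤ (M^2/cN + M)/δ := div_nonneg (by linarith) hδpos.le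
    calc (0:ℝ) < 1 := one_pos
      _ ≤ 1 + (M^2/cN + M)/δ := by linarith
      _ = κ := hκ.symm
  refine ⟨κ⁻¹, inv_pos.2 hκpos, ?_⟩
  intro x hx hcon
  -- coordinates of x in the eigenbasis
  set c : Fin n → ℝ := fun i => e i ⬝ᵥ x with hc
  have hxsum : x = ∑ i, c i • e i := by
    have h := hH.eigenvectorBasis.sum_repr (WithLp.toLp 2 x : EuclideanSpace ℝ (Fin n))
    have h2 : ∀ i, hH.eigenvectorBasis.repr (WithLp.toLp 2 x : EuclideanSpace ℝ (Fin n)) i = c i := by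
      intro i
      rw [hH.eigenvectorBasis.repr_apply_apply]
      simp [hc, he, PiLp.inner_apply, dotProduct, RCLike.inner_apply, mul_comm]
    calc x = (∑ i, hH.eigenvectorBasis.repr (WithLp.toLp 2 x : EuclideanSpace ℝ (Fin n)) i •
          hH.eigenvectorBasis i : EuclideanSpace ℝ (Fin n)) := congrArg WithLp.ofLp h.symm
      _ = ∑ i, c i • e i := by simp_rw [h2]; simp [he, WithLp.ofLp_sum]
  -- negative eigendirections have zero coefficient
  have hneg : ∀ i, lam i < 0 → c i = 0 := by
    intro i hi
    set Li : (Fin n → ℝ) →ₗ[ℝ] ℝ :=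
      { toFun := fun y => e i ⬝ᵥ y
        map_add' := fun y z => dotProduct_add _ y z
        map_smul' := fun r y => by
          simp [dotProduct_smul, smul_eq_mul] } with hLi
    have hle : Submodule.span ℝ {v : Fin n → ℝ | ∃ μ : ℝ, 0 ≤ μ ∧ A0.mulVec v = μ • v}
        ≤ LinearMap.ker Li := by
      rw [Submodule.span_le]
      rintro v ⟨μ, hμ, hv⟩
      have key : μ * (e i ⬝ᵥ v) = lam i * (e i ⬝ᵥ v) := by
        calc μ * (e i ⬝ᵥ v) = e i ⬝ᵥ (μ • v) := by
              rw [dotProduct_smul]; simp [smul_eq_mul]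
          _ = e i ⬝ᵥ A0.mulVec v := by rw [hv]
          _ = v ⬝ᵥ A0.mulVec (e i) := dot_symm' A0 hA0 _ _
          _ = v ⬝ᵥ (lam i • e i) := by rw [heig]
          _ = lam i * (v ⬝ᵥ e i) := by rw [dotProduct_smul]; simp [smul_eq_mul]
          _ = lam i * (e i ⬝ᵥ v) := by rw [dotProduct_comm]
      have hne : μ - lam i ≠ 0 := by intro h; linarith [sub_eq_zero.1 h ▸ hμ]
      have : (μ - lam i) * (e i ⬝ᵥ v) = 0 := by ring_nf; linarith [key]
      have := mul_eq_zero.1 this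
      rcases this with h | h
      · exact absurd h hne
      · exact h
    exact hle hx
  -- split x = u + w
  set d0 : Fin n → ℝ := fun i => if lam i = 0 then c i else 0 with hd0
  set dp : Fin n → ℝ := fun i => if 0 < lam i then c i else 0 with hdp
  set u : Fin n → ℝ := ∑ i, d0 i • e i with hu
  set w : Fin n → ℝ := ∑ i, dp i • e i with hw
  have hcd : ∀ i, c i = d0 i + dp i := by
    intro i
    rcases lt_trichotomy (lam i) 0 with h | h | h
    · simp [hd0, hdp, h.ne, not_lt.2 h.le, hneg i h]
    · simp [hd0, hdp, h]
    · simp [hd0, hdp, h, h.ne']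
  have hxuw : x = u + w := by
    rw [hxsum, hu, hw, ← Finset.sum_add_distrib]
    exact Finset.sum_congr rfl fun i _ => by rw [hcd i, add_smul]
  -- A0 annihilates u
  have hA0u : A0.mulVec u = 0 := by
    rw [hu, ← Matrix.mulVecLin_apply, map_sum]
    refine Finset.sum_eq_zero fun i _ => ?_
    rw [_root_.map_smul, Matrix.mulVecLin_apply, heig]
    rcases eq_or_ne (lam i) 0 with h | h
    · rw [h]; simp
    · simp [hd0, h]
  -- quadratic form of A0 in coordinates
  have hq0 : x ⬝ᵥ A0.mulVec x = ∑ i, lam i * dp i ^ 2 := by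
    rw [hxsum, dot_mulVec_sum_sum']
    have hdiag : ∀ i j, c i * c j * (e i ⬝ᵥ A0.mulVec (e j))
        = if i = j then lam i * c i ^2 else 0 := by
      intro i j
      rw [heig, dotProduct_smul, hortho]
      rcases eq_or_ne i j with rfl | h
      · simp [smul_eq_mul]; ring
      · simp [h]
    calc ∑ i, ∑ j, c i * c j * (e i ⬝ᵥ A0.mulVec (e j))
        = ∑ i, ∑ j, (if i = j then lam i * c i ^ 2 else 0) := by
          exact Finset.sum_congr rfl fun i _ => Finset.sum_congr rfl fun j _ => hdiag i j
      _ = ∑ i, lam i * c i ^ 2 := by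
          refine Finset.sum_congr rfl fun i _ => ?_
          rw [Finset.sum_ite_eq]
          simp
      _ = ∑ i, lam i * dp i ^ 2 := by
          refine Finset.sum_congr rfl fun i _ => ?_
          rcases lt_trichotomy (lam i) 0 with h | h | h
          · rw [hneg i h]; simp [hdp, not_lt.2 h.le]
          · rw [h]; ring_nf
          · simp [hdp, h]
  -- norm of w
  have hwndot : w ⬝ᵥ w = ∑ i, dp i ^ 2 := by
    rw [hw, dot_sum_sum']
    calc ∑ i, ∑ j, dp i * dp j * (e i ⬝ᵥ e j)
        = ∑ i, ∑ j, (if i = j then dp i ^ 2 else 0) := by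
          refine Finset.sum_congr rfl fun i _ => Finset.sum_congr rfl fun j _ => ?_
          rw [hortho]
          rcases eq_or_ne i j with rfl | h
          · simp; ring
          · simp [h]
      _ = ∑ i, dp i ^ 2 := by
          refine Finset.sum_congr rfl fun i _ => ?_
          rw [Finset.sum_ite_eq]
          simp
  have hwn : ‖(WithLp.toLp 2 w : EuclideanSpace ℝ (Fin n))‖ ^ 2 = ∑ i, dp i ^ 2 := by
    rw [norm_sq_eq_dot', hwndot]
  -- lower bound : δ * ‖w‖² ≤ q0(x)
  have hQ : δ * ‖(WithLp.toLp 2 w : EuclideanSpace ℝ (Fin n))‖ ^ 2 ≤ x ⬝ᵥ A0.mulVec x := by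
    rw [hwn, hq0, Finset.mul_sum]
    refine Finset.sum_le_sum fun i _ => ?_
    rcases lt_or_ge 0 (lam i) with h | h
    · exact mul_le_mul_of_nonneg_right (hδle i h) (sq_nonneg _)
    · have : dp i = 0 := by simp [hdp, not_lt.2 h]
      rw [this]; simp
  -- coercivity : cN * ‖u‖² ≤ u A1 u
  have hu1 : cN * ‖(WithLp.toLp 2 u : EuclideanSpace ℝ (Fin n))‖ ^ 2 ≤ u ⬝ᵥ A1.mulVec u :=
    hcoer (WithLp.toLp 2 u : EuclideanSpace ℝ (Fin n)) hA0u
  -- expand the constraint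
  have hconst : x ⬝ᵥ A0.mulVec x - x ⬝ᵥ A1.mulVec x = 1 := by
    rw [← hcon, Matrix.sub_mulVec, dotProduct_sub]
  have hsplit : x ⬝ᵥ A1.mulVec x
      = u ⬝ᵥ A1.mulVec u + 2 * (u ⬝ᵥ A1.mulVec w) + w ⬝ᵥ A1.mulVec w := by
    rw [hxuw, Matrix.mulVec_add]
    simp only [add_dotProduct, dotProduct_add]
    have : w ⬝ᵥ A1.mulVec u = u ⬝ᵥ A1.mulVec w := dot_symm' A1 hA1 w u
    rw [this]; ring
  -- put everything together
  set U : ℝ := ‖(WithLp.toLp 2 u : EuclideanSpace ℝ (Fin n))‖ with hU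
  set W : ℝ := ‖(WithLp.toLp 2 w : EuclideanSpace ℝ (Fin n))‖ with hW
  have hcross := hMbound u w
  have hww := hMbound w w
  rw [← hU, ← hW] at hcross
  rw [← hW] at hww
  have hcross' : -(M * U * W) ≤ u ⬝ᵥ A1.mulVec w := neg_le_of_abs_le hcross
  have hww' : -(M * W * W) ≤ w ⬝ᵥ A1.mulVec w := neg_le_of_abs_le hww
  set q : ℝ := x ⬝ᵥ A0.mulVec x with hq
  clear_value q
  clear_value U
  clear_value W
  clear_value u
  clear_value w
  clear_value κ
  clear_value δ
  clear_value M
  clear_value L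
  clear_value e lam
  clear hcross hww hMbound hcoer hcon hx hq0 hwndot hwn hA0u hxuw hcd hxsum hneg
  clear hu hw hU hW hq hd0 hdp hc hδ hδle hortho heig hL hM hs hT hlam he hsne
  clear c d0 dp e lam s T L hH hpd hsing h0 h1 xbar
  -- 1 ≤ q + (M²/cN + M) * W²
  have hkey : 1 ≤ q + (M^2/cN + M) * W^2 := by
    have hAM : 2 * (M * U * W) ≤ cN * U^2 + (M^2/cN) * W^2 := by
      have h := sq_nonneg (cN * U - M * W)
      have h2 : cN * (cN * U^2 + (M^2/cN) * W^2 - 2 * (M * U * W)) ≥ 0 := by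
        have : cN * ((M^2/cN) * W^2) = M^2 * W^2 := by field_simp
        nlinarith [h]
      nlinarith [hcN]
    nlinarith [hu1, hcross', hww', hconst, hsplit]
  -- conclude
  have hWq : W^2 ≤ q / δ := by
    rw [le_div_iff₀ hδpos]
    linarith [hQ]
  have hfin : 1 ≤ q * κ := by
    have hnn : 0 ≤ M^2/cN + M := by
      have h1 : 0 ≤ M^2/cN := div_nonneg (sq_nonneg M) hcN.le
      linarith
    have : (M^2/cN + M) * W^2 ≤ (M^2/cN + M) * (q/δ) :=
      mul_le_mul_of_nonneg_left hWq hnn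
    have hqκ : q * κ = q + (M^2/cN + M) * (q/δ) := by
      rw [hκ]; field_simp
    linarith [hkey, this, hqκ.ge, hqκ.le]
  have := mul_le_mul_of_nonneg_right hfin (inv_nonneg.2 hκpos.le)
  rw [one_mul, mul_assoc, mul_inv_cancel₀ hκpos.ne', mul_one] at this
  exact this
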